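/- Let Λ be a symmetric positive definite n×n real matrix, let J be a skew-symmetric n×n real matrix, let R be a positive semidefinite symmetric n×n real matrix, and let Σ be a positive definite symmetric n×n real matrix (Σ = σσᵀ for an additive, i.e. constant, diffusion coefficient σ). Let H(x) = (1/2)·xᵀΛx. Then there exists ε > 0 such that for every x ∈ ℝⁿ with ‖x‖ < ε the autonomous generator satisfies L₀H(x) = −xᵀΛRΛx + (1/2)·Tr(ΛΣ) > 0. In particular the passivity inequality L₀H(x) ≤ 0 fails on a neighborhood of the origin, so the stochastic port–Hamiltonian system with additive non-degenerate noise and quadratic Hamiltonian is never passive. -/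

import Mathlib

open Matrix

private lemma skew_quad {n : ℕ} (J : Matrix (Fin n) (Fin n) ℝ) (hJ : Jᵀ = -J)
    (y : Fin n → ℝ) : (J *ᵥ y) ⬝ᵥ y = 0 := by
  have h1 : (J *ᵥ y) ⬝ᵥ y = y ⬝ᵥ (J *ᵥ y) := dotProduct_comm _ _
  have h2 : y ⬝ᵥ (J *ᵥ y) = (Jᵀ *ᵥ y) ⬝ᵥ y := by
    rw [dotProduct_mulVec, Matrix.mulVec_transpose]
  have h3 : (Jᵀ *ᵥ y) ⬝ᵥ y = -((J *ᵥ y) ⬝ᵥ y) := by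
    rw [hJ, Matrix.neg_mulVec, neg_dotProduct]
  linarith [h1.trans (h2.trans h3)]

/-- **A SPHS with additive non-degenerate noise and quadratic Hamiltonian is never passive.**
With `H x = ½ xᵀ Λ x`, there is `ε > 0` such that for all `‖x‖ < ε` the autonomous
generator satisfies `L₀H x = −xᵀΛRΛx + ½ Tr(ΛΣ) > 0`, so the passivity inequality
`L₀H x ≤ 0` fails in a neighborhood of the origin. -/
theorem stmt_1 (n : ℕ) (hn : 0 < n)
    (Λ J R Sig : Matrix (Fin n) (Fin n) ℝ)
    (hΛ : Λ.PosDef) (hΛsymm : Λ.IsSymm)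
    (hJ : Jᵀ = -J)
    (hR : R.PosSemidef) (hRsymm : R.IsSymm)
    (hSig : Sig.PosDef) (hSigsymm : Sig.IsSymm)
    (H : (Fin n → ℝ) → ℝ)
    (hH : ∀ x, H x = (1 / 2) * (x ⬝ᵥ Λ.mulVec x)) :
    ∃ ε > (0 : ℝ), ∀ x : Fin n → ℝ, ‖x‖ < ε →
      ((J - R).mulVec (Λ.mulVec x)) ⬝ᵥ (Λ.mulVec x) + (1 / 2) * Matrix.trace (Sig * Λ) =
          -(x ⬝ᵥ (Λ * R * Λ).mulVec x) + (1 / 2) * Matrix.trace (Λ * Sig) ∧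
        0 < ((J - R).mulVec (Λ.mulVec x)) ⬝ᵥ (Λ.mulVec x) +
          (1 / 2) * Matrix.trace (Sig * Λ) := by
  -- the algebraic identity
  have key : ∀ x : Fin n → ℝ,
      ((J - R).mulVec (Λ.mulVec x)) ⬝ᵥ (Λ.mulVec x) = -(x ⬝ᵥ (Λ * R * Λ).mulVec x) := by
    intro x
    set y := Λ *ᵥ x with hy
    have hrhs : x ⬝ᵥ (Λ * R * Λ) *ᵥ x = y ⬝ᵥ (R *ᵥ y) := by
      rw [← Matrix.mulVec_mulVec, ← Matrix.mulVec_mulVec, dotProduct_mulVec,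
        ← Matrix.mulVec_transpose, hΛsymm.eq]
    rw [hrhs, Matrix.sub_mulVec, sub_dotProduct, skew_quad J hJ y, zero_sub,
      dotProduct_comm]
  -- positivity of the trace term
  have hΛH : Λᴴ = Λ := hΛ.isHermitian.eq
  obtain ⟨S, hS2, hSH⟩ : ∃ S : Matrix (Fin n) (Fin n) ℝ, S * S = Sig ∧ Sᴴ = S := by
    open scoped MatrixOrder in
    exact ⟨CFC.sqrt Sig, CFC.sqrt_mul_sqrt_self Sig hSig.posSemidef.nonneg,
      (CFC.sqrt_nonneg Sig).posSemidef.1.eq⟩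
  have hM : (S * Λ * S).PosSemidef := by
    have := hΛ.posSemidef.conjTranspose_mul_mul_same S
    rwa [hSH] at this
  have htr_eq : Matrix.trace (Λ * Sig) = Matrix.trace (S * Λ * S) := by
    rw [← hS2, ← Matrix.mul_assoc, Matrix.trace_mul_cycle]
  have hdiag : ∀ j, (S * Λ * S) j j = (S *ᵥ Pi.single j 1) ⬝ᵥ Λ *ᵥ (S *ᵥ Pi.single j 1) := by
    intro j
    have h := congrArg (fun M : Matrix (Fin n) (Fin n) ℝ => M j j)
      (rfl : S * Λ * S = S * Λ * S)
    have : (S * Λ * S) j j = Pi.single j 1 ⬝ᵥ (S * Λ * S) *ᵥ Pi.single j 1 := by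
      simp [Matrix.mulVec_single, single_dotProduct]
    have hST : Sᵀ = S := by rw [← Matrix.conjTranspose_eq_transpose_of_trivial, hSH]
    rw [this, ← Matrix.mulVec_mulVec, ← Matrix.mulVec_mulVec, dotProduct_mulVec,
      ← Matrix.mulVec_transpose, hST]
  have hSne : S ≠ 0 := by
    intro h0
    have : Sig = 0 := by rw [← hS2, h0, Matrix.mul_zero]
    have hx : (Pi.single (⟨0, hn⟩ : Fin n) 1 : Fin n → ℝ) ≠ 0 := by
      intro h
      have := congrFun h (⟨0, hn⟩ : Fin n)
      simp at this
    have h1 := hSig.dotProduct_mulVec_pos hx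
    rw [this, Matrix.zero_mulVec, dotProduct_zero] at h1
    exact lt_irrefl 0 h1
  have hcol : ∃ j, (S *ᵥ Pi.single j 1) ≠ 0 := by
    by_contra h
    push_neg at h
    apply hSne
    ext i j
    have := congrFun (h j) i
    simpa [Matrix.mulVec_single] using this
  have htr_pos : 0 < Matrix.trace (Λ * Sig) := by
    rw [htr_eq, Matrix.trace]
    obtain ⟨j₀, hj₀⟩ := hcol
    apply Finset.sum_pos'
    · intro j _
      rw [Matrix.diag_apply, hdiag j]
      have := hΛ.posSemidef.dotProduct_mulVec_nonneg (S *ᵥ Pi.single j 1)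
      simpa using this
    · refine ⟨j₀, Finset.mem_univ _, ?_⟩
      rw [Matrix.diag_apply, hdiag j₀]
      have := hΛ.dotProduct_mulVec_pos hj₀
      simpa using this
  set c := (1 / 2) * Matrix.trace (Λ * Sig) with hc
  have hcpos : 0 < c := by positivity
  -- nonnegativity of the quadratic form
  have hquad : ∀ x : Fin n → ℝ, 0 ≤ x ⬝ᵥ (Λ * R * Λ) *ᵥ x := by
    intro x
    have h := hR.conjTranspose_mul_mul_same Λ
    rw [hΛH] at h
    simpa using h.dotProduct_mulVec_nonneg x
  -- continuity
  have hcont : Continuous fun x : Fin n → ℝ => x ⬝ᵥ (Λ * R * Λ) *ᵥ x := by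
    simp only [Matrix.mulVec, dotProduct]
    exact continuous_finset_sum _ fun i _ => (continuous_apply i).mul
      (continuous_finset_sum _ fun j _ => continuous_const.mul (continuous_apply j))
  obtain ⟨ε, hε, hball⟩ := Metric.continuousAt_iff.mp hcont.continuousAt c hcpos
  refine ⟨ε, hε, fun x hx => ?_⟩
  have hdist : dist x 0 < ε := by rwa [dist_zero_right]
  have hlt := hball hdist
  rw [Matrix.mulVec_zero, dotProduct_zero, Real.dist_eq, sub_zero] at hlt
  have hlt' : x ⬝ᵥ (Λ * R * Λ) *ᵥ x < c := lt_of_abs_lt hlt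
  have htr2 : Matrix.trace (Sig * Λ) = Matrix.trace (Λ * Sig) := Matrix.trace_mul_comm _ _
  constructor
  · rw [key x, htr2]
  · rw [key x, htr2]
    have := hquad x
    simp only [hc] at hlt' ⊢
    linarith
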